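/- The canonical successor function S on complete types is sensible: for Ψ=S(Φ), (1) ○φ∈Φ⁺ iff φ∈Ψ⁺; (2) ○φ∈Φ⁻ iff φ∈Ψ⁻; (3) if ◇φ∈Φ⁺ then φ∈Φ⁺ or ◇φ∈Ψ⁺; (4) if ◇φ∈Φ⁻ then φ∈Φ⁻ and ◇φ∈Ψ⁻; (5) if □φ∈Φ⁺ then φ∈Φ⁺ and □φ∈Ψ⁺; (6) if □φ∈Φ⁻ then φ∈Φ⁻ or □φ∈Ψ⁻. -/
import Mathlib


/-- Formulas of the Gödel temporal language. -/
inductive GF where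
  | var : Nat → GF
  | and : GF → GF → GF
  | or : GF → GF → GF
  | imp : GF → GF → GF
  | coimp : GF → GF → GF
  | next : GF → GF
  | dia : GF → GF
  | box : GF → GF
deriving DecidableEq

/-- ⊥ := p ⇐ p -/
def GF.bot : GF := .coimp (.var 0) (.var 0)
/-- ⊤ := p ⇒ p -/
def GF.top : GF := .imp (.var 0) (.var 0)
/-- ¬φ := φ ⇒ ⊥ -/
def GF.neg (φ : GF) : GF := .imp φ .bot
/-- φ ⟺ ψ := (φ⇒ψ) ∧ (ψ⇒φ) -/
def GF.iffF (φ ψ : GF) : GF := .and (.imp φ ψ) (.imp ψ φ)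

/-- The deductive calculus GTL. Intuitionistic tautologies are generated by a
standard Hilbert-style axiomatization of intuitionistic propositional logic. -/
inductive GTL : GF → Prop where
  -- intuitionistic axioms
  | i1 (φ ψ : GF) : GTL (.imp φ (.imp ψ φ))
  | i2 (φ ψ χ : GF) : GTL (.imp (.imp φ (.imp ψ χ)) (.imp (.imp φ ψ) (.imp φ χ)))
  | i3 (φ ψ : GF) : GTL (.imp (.and φ ψ) φ)
  | i4 (φ ψ : GF) : GTL (.imp (.and φ ψ) ψ)
  | i5 (φ ψ : GF) : GTL (.imp φ (.imp ψ (.and φ ψ)))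
  | i6 (φ ψ : GF) : GTL (.imp φ (.or φ ψ))
  | i7 (φ ψ : GF) : GTL (.imp ψ (.or φ ψ))
  | i8 (φ ψ χ : GF) : GTL (.imp (.imp φ χ) (.imp (.imp ψ χ) (.imp (.or φ ψ) χ)))
  | i9 (φ : GF) : GTL (.imp .bot φ)
  -- H-B axioms and rules
  | hb1 (φ ψ : GF) : GTL (.imp φ (.or ψ (.coimp φ ψ)))
  | hbMon {φ ψ : GF} (θ : GF) : GTL (.imp φ ψ) → GTL (.imp (.coimp φ θ) (.coimp ψ θ))
  | hbDis {φ ψ γ : GF} : GTL (.imp φ (.or ψ γ)) → GTL (.imp (.coimp φ ψ) γ)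
  -- linearity axioms
  | lin (φ ψ : GF) : GTL (.or (.imp φ ψ) (.imp ψ φ))
  | colin (φ ψ : GF) : GTL (GF.neg (.and (.coimp φ ψ) (.coimp ψ φ)))
  -- temporal axioms
  | nBot : GTL (GF.neg (.next .bot))
  | nOr (φ ψ : GF) : GTL (.imp (.next (.or φ ψ)) (.or (.next φ) (.next ψ)))
  | nAnd (φ ψ : GF) : GTL (.imp (.and (.next φ) (.next ψ)) (.next (.and φ ψ)))
  | nImp (φ ψ : GF) : GTL (GF.iffF (.next (.imp φ ψ)) (.imp (.next φ) (.next ψ)))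
  | kBox (φ ψ : GF) : GTL (.imp (.box (.imp φ ψ)) (.imp (.box φ) (.box ψ)))
  | kDia (φ ψ : GF) : GTL (.imp (.box (.imp φ ψ)) (.imp (.dia φ) (.dia ψ)))
  | boxFix (φ : GF) : GTL (.imp (.box φ) (.and φ (.next (.box φ))))
  | diaFix (φ : GF) : GTL (.imp (.or φ (.next (.dia φ))) (.dia φ))
  | indBox (φ : GF) : GTL (.imp (.box (.imp φ (.next φ))) (.imp φ (.box φ)))
  | indDia (φ : GF) : GTL (.imp (.box (.imp (.next φ) φ)) (.imp (.dia φ) φ))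
  -- back–up confluence axiom
  | backup (φ ψ : GF) : GTL (.imp (.next (.coimp φ ψ)) (.coimp (.next φ) (.next ψ)))
  -- standard modal rules
  | mp {φ ψ : GF} : GTL φ → GTL (.imp φ ψ) → GTL ψ
  | necN {φ : GF} : GTL φ → GTL (.next φ)
  | necBox {φ : GF} : GTL φ → GTL (.box φ)

/-- Finite conjunction (⋀∅ = ⊤). -/
def GF.conj : List GF → GF := fun l => l.foldr .and .top
/-- Finite disjunction (⋁∅ = ⊥). -/
def GF.disj : List GF → GF := fun l => l.foldr .or .bot

/-- Gentzen-style consequence: Γ ⊢ Δ iff ⋀Γ' ⇒ ⋁Δ' ∈ GTL for some finite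
Γ' ⊆ Γ, Δ' ⊆ Δ. -/
def GSeq (Γ Δ : Set GF) : Prop :=
  ∃ l m : List GF, (∀ φ ∈ l, φ ∈ Γ) ∧ (∀ φ ∈ m, φ ∈ Δ) ∧
    GTL (.imp (GF.conj l) (GF.disj m))

/-- A complete type: a consistent saturated pair. -/
def CompleteType (P N : Set GF) : Prop :=
  ¬ GSeq P N ∧ ∀ φ : GF, φ ∈ P ∨ φ ∈ N

/-- The canonical order: Φ ≤ Ψ iff Φ⁻ ⊆ Ψ⁻ and Φ⁺ ⊇ Ψ⁺. -/
def TLe (Φ Ψ : Set GF × Set GF) : Prop := Φ.2 ⊆ Ψ.2 ∧ Ψ.1 ⊆ Φ.1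

/-- The canonical successor: S(Φ) = (⊖Φ⁺, ⊖Φ⁻). -/
def TSucc (Φ : Set GF × Set GF) : Set GF × Set GF :=
  ({φ | GF.next φ ∈ Φ.1}, {φ | GF.next φ ∈ Φ.2})

namespace GTLAux

open GF GTL

lemma gid (φ : GF) : GTL (φ.imp φ) :=
  (GTL.i1 φ φ).mp ((GTL.i1 φ (φ.imp φ)).mp (GTL.i2 φ (φ.imp φ) φ))

lemma gtrans {a b c : GF} (h1 : GTL (a.imp b)) (h2 : GTL (b.imp c)) :
    GTL (a.imp c) :=
  h1.mp ((h2.mp (GTL.i1 (b.imp c) a)).mp (GTL.i2 a b c))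

lemma andIntro {χ φ ψ : GF} (h1 : GTL (χ.imp φ)) (h2 : GTL (χ.imp ψ)) :
    GTL (χ.imp (φ.and ψ)) :=
  h2.mp ((gtrans h1 (GTL.i5 φ ψ)).mp (GTL.i2 χ ψ (φ.and ψ)))

lemma orElim {φ ψ χ : GF} (h1 : GTL (φ.imp χ)) (h2 : GTL (ψ.imp χ)) :
    GTL ((φ.or ψ).imp χ) :=
  h2.mp (h1.mp (GTL.i8 φ ψ χ))

lemma nextMono {φ ψ : GF} (h : GTL (φ.imp ψ)) :
    GTL ((GF.next φ).imp (GF.next ψ)) :=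
  (GTL.necN h).mp ((GTL.nImp φ ψ).mp (GTL.i3 _ _))

lemma boxMono {φ ψ : GF} (h : GTL (φ.imp ψ)) :
    GTL ((GF.box φ).imp (GF.box ψ)) :=
  (GTL.necBox h).mp (GTL.kBox φ ψ)

lemma diaMono {φ ψ : GF} (h : GTL (φ.imp ψ)) :
    GTL ((GF.dia φ).imp (GF.dia ψ)) :=
  (GTL.necBox h).mp (GTL.kDia φ ψ)

lemma impTop (a : GF) : GTL (a.imp GF.top) :=
  (gid (GF.var 0)).mp (GTL.i1 GF.top a)

/-- ◇φ ⇒ φ ∨ ○◇φ -/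
lemma diaUnfold (φ : GF) :
    GTL ((GF.dia φ).imp (φ.or (GF.next (GF.dia φ)))) := by
  set χ := φ.or (GF.next (GF.dia φ)) with hχ
  have step1 : GTL ((GF.next χ).imp χ) :=
    gtrans (nextMono (GTL.diaFix φ)) (GTL.i7 φ (GF.next (GF.dia φ)))
  have step2 : GTL ((GF.dia χ).imp χ) := (GTL.necBox step1).mp (GTL.indDia χ)
  exact gtrans (diaMono (GTL.i6 φ (GF.next (GF.dia φ)))) step2

/-- φ ∧ ○□φ ⇒ □φ -/
lemma boxFold (φ : GF) :
    GTL ((φ.and (GF.next (GF.box φ))).imp (GF.box φ)) := by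
  set χ := φ.and (GF.next (GF.box φ)) with hχ
  have step1 : GTL (χ.imp (GF.next χ)) :=
    gtrans (GTL.i4 φ (GF.next (GF.box φ))) (nextMono (GTL.boxFix φ))
  have step2 : GTL (χ.imp (GF.box χ)) := (GTL.necBox step1).mp (GTL.indBox χ)
  exact gtrans step2 (boxMono (GTL.i3 φ (GF.next (GF.box φ))))

/-- Package a single-premise single-conclusion derivation as a sequent. -/
lemma seq11 {a b : GF} (hd : GTL (a.imp b)) (Γ Δ : Set GF)
    (ha : a ∈ Γ) (hb : b ∈ Δ) : GSeq Γ Δ := by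
  refine ⟨[a], [b], ?_, ?_, ?_⟩
  · simp [ha]
  · simp [hb]
  · show GTL ((a.and GF.top).imp (b.or GF.bot))
    exact gtrans (GTL.i3 a GF.top) (gtrans hd (GTL.i6 b GF.bot))

lemma seq12 {a b c : GF} (hd : GTL (a.imp (b.or c))) (Γ Δ : Set GF)
    (ha : a ∈ Γ) (hb : b ∈ Δ) (hc : c ∈ Δ) : GSeq Γ Δ := by
  refine ⟨[a], [b, c], ?_, ?_, ?_⟩
  · simp [ha]
  · simp [hb, hc]
  · show GTL ((a.and GF.top).imp (b.or (c.or GF.bot)))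
    refine gtrans (GTL.i3 a GF.top) (gtrans hd ?_)
    exact orElim (GTL.i6 b (c.or GF.bot))
      (gtrans (GTL.i6 c GF.bot) (GTL.i7 b (c.or GF.bot)))

lemma seq21 {a b c : GF} (hd : GTL ((a.and b).imp c)) (Γ Δ : Set GF)
    (ha : a ∈ Γ) (hb : b ∈ Γ) (hc : c ∈ Δ) : GSeq Γ Δ := by
  refine ⟨[a, b], [c], ?_, ?_, ?_⟩
  · simp [ha, hb]
  · simp [hc]
  · show GTL ((a.and (b.and GF.top)).imp (c.or GF.bot))
    refine gtrans ?_ (gtrans hd (GTL.i6 c GF.bot))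
    exact andIntro (GTL.i3 a (b.and GF.top))
      (gtrans (GTL.i4 a (b.and GF.top)) (GTL.i3 b GF.top))

end GTLAux

open GTLAux in
/-- The canonical successor is sensible. -/
theorem stmt17 (P N : Set GF) (h : CompleteType P N) :
    (∀ φ : GF, GF.next φ ∈ P ↔ φ ∈ (TSucc (P, N)).1) ∧
    (∀ φ : GF, GF.next φ ∈ N ↔ φ ∈ (TSucc (P, N)).2) ∧
    (∀ φ : GF, GF.dia φ ∈ P → φ ∈ P ∨ GF.dia φ ∈ (TSucc (P, N)).1) ∧
    (∀ φ : GF, GF.dia φ ∈ N → φ ∈ N ∧ GF.dia φ ∈ (TSucc (P, N)).2) ∧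
    (∀ φ : GF, GF.box φ ∈ P → φ ∈ P ∧ GF.box φ ∈ (TSucc (P, N)).1) ∧
    (∀ φ : GF, GF.box φ ∈ N → φ ∈ N ∨ GF.box φ ∈ (TSucc (P, N)).2) := by
  obtain ⟨hcon, htot⟩ := h
  refine ⟨fun φ => Iff.rfl, fun φ => Iff.rfl, ?_, ?_, ?_, ?_⟩
  · -- ◇φ ∈ P → φ ∈ P ∨ ○◇φ ∈ P
    intro φ hd
    rcases htot φ with hp | hn
    · exact Or.inl hp
    rcases htot (GF.next (GF.dia φ)) with hp | hn2
    · exact Or.inr hp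
    exact absurd (seq12 (diaUnfold φ) P N hd hn hn2) hcon
  · -- ◇φ ∈ N → φ ∈ N ∧ ○◇φ ∈ N
    intro φ hd
    constructor
    · rcases htot φ with hp | hn
      · exact absurd (seq11 (gtrans (GTL.i6 φ (GF.next (GF.dia φ))) (GTL.diaFix φ))
          P N hp hd) hcon
      · exact hn
    · rcases htot (GF.next (GF.dia φ)) with hp | hn
      · exact absurd (seq11 (gtrans (GTL.i7 φ (GF.next (GF.dia φ))) (GTL.diaFix φ))
          P N hp hd) hcon
      · exact hn
  · -- □φ ∈ P → φ ∈ P ∧ ○□φ ∈ P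
    intro φ hb
    constructor
    · rcases htot φ with hp | hn
      · exact hp
      · exact absurd (seq11 (gtrans (GTL.boxFix φ) (GTL.i3 φ (GF.next (GF.box φ))))
          P N hb hn) hcon
    · rcases htot (GF.next (GF.box φ)) with hp | hn
      · exact hp
      · exact absurd (seq11 (gtrans (GTL.boxFix φ) (GTL.i4 φ (GF.next (GF.box φ))))
          P N hb hn) hcon
  · -- □φ ∈ N → φ ∈ N ∨ ○□φ ∈ N
    intro φ hb
    rcases htot φ with hp | hn
    · rcases htot (GF.next (GF.box φ)) with hp2 | hn2
      · exact absurd (seq21 (boxFold φ) P N hp hp2 hb) hcon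
      · exact Or.inr hn2
    · exact Or.inl hn
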